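/- Let p, q ∈ ℝ[x] be nonzero polynomials such that p(n) ≠ 0 and q(n) ≠ 0 for every integer n ≥ 1. If p and q have the same degree and the same leading coefficient, then the sequence of partial products P_N = ∏_{n=1}^{N} (p(n)/q(n))^{u_n} converges as N → ∞ to a nonzero limit. -/

import Mathlib

open Filter Finset Topology Polynomial

def u (n : ℕ) : ℤ := (-1) ^ (Nat.digits 2 n).sum

lemma u_sq (n : ℕ) : u n = 1 ∨ u n = -1 :=
  (Nat.even_or_odd _).imp Even.neg_one_pow Odd.neg_one_pow

lemma u_ne_zero (n : ℕ) : u n ≠ 0 := by rcases u_sq n with h | h <;> simp [h]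

lemma u_abs (n : ℕ) : |(u n : ℝ)| = 1 := by rcases u_sq n with h | h <;> simp [h]

lemma u_odd (k : ℕ) : u (2 * k + 1) = - u (2 * k) := by
  unfold u
  have h5 : Nat.digits 2 (2*k+1) = 1 :: Nat.digits 2 k := by
    rw [Nat.digits_def' (by norm_num : 1 < 2) (by omega)]
    have e1 : (2*k+1) % 2 = 1 := by omega
    have e2 : (2*k+1) / 2 = k := by omega
    rw [e1, e2]
  rcases Nat.eq_zero_or_pos k with rfl | hk
  · simp [h5]
  · have h6 : Nat.digits 2 (2*k) = 0 :: Nat.digits 2 k := by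
      rw [Nat.digits_def' (by norm_num : 1 < 2) (by omega)]
      have e1 : (2*k) % 2 = 0 := by omega
      have e2 : (2*k) / 2 = k := by omega
      rw [e1, e2]
    rw [h5, h6]
    simp [List.sum_cons, pow_succ]
    ring

lemma log_one_add_abs_le {t : ℝ} (ht : |t| ≤ 1/2) : |Real.log (1 + t)| ≤ 2 * |t| := by
  have habs := abs_le.1 ht
  have h1 : (0:ℝ) < 1 + t := by linarith [habs.1]
  rcases le_or_gt 0 t with h | h
  · have hub := Real.log_le_sub_one_of_pos h1
    have hlb : 0 ≤ Real.log (1 + t) := Real.log_nonneg (by linarith)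
    rw [abs_of_nonneg hlb, abs_of_nonneg h]; linarith
  · have hub := Real.log_le_sub_one_of_pos (show (0:ℝ) < (1+t)⁻¹ by positivity)
    rw [Real.log_inv] at hub
    have hlb : Real.log (1 + t) ≤ 0 := Real.log_nonpos (by linarith) (by linarith)
    rw [abs_of_nonpos hlb, abs_of_neg h]
    have h2 : (1+t)⁻¹ - 1 = -t / (1+t) := by field_simp; ring
    rw [h2] at hub
    have : -t / (1+t) ≤ 2 * -t := by
      rw [div_le_iff₀ h1]; nlinarith
    linarith

noncomputable def sh (g : Polynomial ℝ) : Polynomial ℝ := g.comp (X + C 1)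

lemma sh_natDegree (g : Polynomial ℝ) : (sh g).natDegree = g.natDegree := by
  rw [sh, ← taylor_apply, natDegree_taylor]

lemma sh_ne_zero {g : Polynomial ℝ} (hg : g ≠ 0) : sh g ≠ 0 :=
  comp_X_add_C_ne_zero_iff.2 hg

lemma sh_degree (g : Polynomial ℝ) : (sh g).degree = g.degree := by
  rcases eq_or_ne g 0 with rfl | hg
  · simp [sh]
  · rw [degree_eq_natDegree (sh_ne_zero hg), degree_eq_natDegree hg, sh_natDegree]

lemma sh_leadingCoeff (g : Polynomial ℝ) : (sh g).leadingCoeff = g.leadingCoeff := by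
  have e : ((X : Polynomial ℝ) + C 1).natDegree ≠ 0 := by rw [natDegree_X_add_C]; norm_num
  rw [sh, leadingCoeff_comp e, leadingCoeff_X_add_C, one_pow, mul_one]

lemma sh_eval (g : Polynomial ℝ) (x : ℝ) : (sh g).eval x = g.eval (x + 1) := by
  simp [sh, eval_comp]

lemma sh_sub_natDegree (g : Polynomial ℝ) : (sh g - g).natDegree ≤ g.natDegree - 1 := by
  rcases eq_or_ne (sh g - g) 0 with h | h
  · simp [h]
  rcases Nat.eq_zero_or_pos g.natDegree with h0 | h0
  · exfalso
    obtain ⟨a, rfl⟩ := natDegree_eq_zero.1 h0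
    simp [sh] at h
  · have hg : g ≠ 0 := fun hh => by simp [hh] at h0
    have hlt : (sh g - g).degree < g.degree :=
      (sh_degree g) ▸ degree_sub_lt (sh_degree g) (sh_ne_zero hg) (sh_leadingCoeff g)
    have := natDegree_lt_natDegree h hlt
    omega

lemma key_degree (p q : Polynomial ℝ) (hp : p ≠ 0) (hq : q ≠ 0)
    (hdeg : p.degree = q.degree) (hlead : p.leadingCoeff = q.leadingCoeff)
    (hd : 1 ≤ p.natDegree) :
    (X ^ 2 * (p * sh q - sh p * q)).degree ≤ (sh p * q).degree := by
  set d := p.natDegree with hdd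
  have hqd : q.natDegree = d := natDegree_eq_of_degree_eq_some (hdeg.symm.trans (degree_eq_natDegree hp))
  set h : Polynomial ℝ := q - p with hh
  have hqph : q = p + h := by ring
  have hF : p * sh q - sh p * q = p * (sh h - h) - (sh p - p) * h := by
    rw [hqph, show sh (p + h) = sh p + sh h from by simp [sh, add_comp]]
    ring
  have hnh : h.natDegree ≤ d - 1 := by
    rcases eq_or_ne h 0 with h0 | h0
    · simp [h0]
    · have : h.degree < p.degree := by
        rw [hh]
        exact hdeg ▸ degree_sub_lt hdeg.symm hq hlead.symm
      have := natDegree_lt_natDegree h0 this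
      omega
  have hterm1 : (p * (sh h - h)).natDegree ≤ 2 * d - 2 := by
    rcases Nat.eq_zero_or_pos h.natDegree with h0 | h0
    · obtain ⟨a, ha⟩ := natDegree_eq_zero.1 h0
      rw [← ha]
      simp [sh]
    · calc (p * (sh h - h)).natDegree ≤ p.natDegree + (sh h - h).natDegree := natDegree_mul_le
        _ ≤ d + (h.natDegree - 1) := by
            have := sh_sub_natDegree h; omega
        _ ≤ 2 * d - 2 := by omega
  have hterm2 : ((sh p - p) * h).natDegree ≤ 2 * d - 2 := by
    calc ((sh p - p) * h).natDegree ≤ (sh p - p).natDegree + h.natDegree := natDegree_mul_le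
      _ ≤ (d - 1) + (d - 1) := add_le_add (sh_sub_natDegree p) hnh
      _ ≤ 2 * d - 2 := by omega
  have hF2 : (p * sh q - sh p * q).natDegree ≤ 2 * d - 2 := by
    rw [hF]; exact le_trans (natDegree_sub_le _ _) (max_le hterm1 hterm2)
  rcases eq_or_ne (p * sh q - sh p * q) 0 with hF0 | hF0
  · rw [hF0, mul_zero, degree_zero]; exact bot_le
  have hX2 : ((X : Polynomial ℝ) ^ 2) ≠ 0 := pow_ne_zero _ X_ne_zero
  have hL : (X ^ 2 * (p * sh q - sh p * q)).natDegree ≤ 2 * d := by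
    rw [natDegree_mul hX2 hF0, natDegree_X_pow]
    omega
  have hRne : sh p * q ≠ 0 := mul_ne_zero (sh_ne_zero hp) hq
  have hRdeg : (sh p * q).natDegree = 2 * d := by
    rw [natDegree_mul (sh_ne_zero hp) hq, sh_natDegree, hqd]; omega
  rw [degree_eq_natDegree (mul_ne_zero hX2 hF0), degree_eq_natDegree hRne, hRdeg]
  exact_mod_cast hL

/-- If `p, q` are nonzero real polynomials, nonvanishing at the positive integers,
with the same degree and the same leading coefficient, then the partial products
`∏_{n=1}^{N} (p(n)/q(n))^{u_n}` converge to a nonzero limit. -/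
theorem stmt_2 (p q : Polynomial ℝ) (hp : p ≠ 0) (hq : q ≠ 0)
    (hpn : ∀ n : ℕ, 1 ≤ n → p.eval (n : ℝ) ≠ 0)
    (hqn : ∀ n : ℕ, 1 ≤ n → q.eval (n : ℝ) ≠ 0)
    (hdeg : p.degree = q.degree) (hlead : p.leadingCoeff = q.leadingCoeff) :
    ∃ L : ℝ, L ≠ 0 ∧
      Tendsto (fun N : ℕ => ∏ n ∈ Finset.Icc 1 N,
        (p.eval (n : ℝ) / q.eval (n : ℝ)) ^ (u n)) atTop (𝓝 L) := by
  rcases Nat.eq_zero_or_pos p.natDegree with hd0 | hd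
  · -- degenerate case : p = q, all factors are 1
    have hpq : p = q := by
      have hq0 : q.natDegree = p.natDegree :=
        natDegree_eq_of_degree_eq_some (hdeg.symm.trans (degree_eq_natDegree hp))
      obtain ⟨b, hb⟩ := natDegree_eq_zero.1 (hq0.trans hd0)
      obtain ⟨a, ha⟩ := natDegree_eq_zero.1 hd0
      rw [← ha, ← hb] at hlead ⊢
      rw [leadingCoeff_C, leadingCoeff_C] at hlead
      rw [hlead]
    refine ⟨1, one_ne_zero, ?_⟩
    have : ∀ N : ℕ, (∏ n ∈ Finset.Icc 1 N,
        (p.eval (n : ℝ) / q.eval (n : ℝ)) ^ (u n)) = 1 := by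
      intro N
      apply Finset.prod_eq_one
      intro n hn
      have hn1 : 1 ≤ n := (Finset.mem_Icc.1 hn).1
      rw [hpq, div_self (hqn n hn1), one_zpow]
    simpa [this] using tendsto_const_nhds
  · set r : ℕ → ℝ := fun n => p.eval (n : ℝ) / q.eval (n : ℝ) with hrdef
    set a : ℕ → ℝ := fun n => (u n : ℝ) * Real.log (r n) with hadef
    set F : Polynomial ℝ := p * sh q - sh p * q with hFdef
    set D : Polynomial ℝ := sh p * q with hDdef
    set t : ℕ → ℝ := fun n => F.eval (n : ℝ) / D.eval (n : ℝ) with htdef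
    have hq_lead : q.leadingCoeff ≠ 0 := leadingCoeff_ne_zero.2 hq
    have hr_lim : Tendsto r atTop (𝓝 1) := by
      have h1 := div_tendsto_leadingCoeff_div_of_degree_eq p q hdeg
      rw [hlead, div_self hq_lead] at h1
      exact h1.comp tendsto_natCast_atTop_atTop
    have hpos : ∀ᶠ n in atTop, 0 < r n := hr_lim.eventually (eventually_gt_nhds one_pos)
    have hD_ne : ∀ n : ℕ, 1 ≤ n → D.eval (n : ℝ) ≠ 0 := by
      intro n hn
      have h1 := hpn (n + 1) (by omega)
      rw [Nat.cast_add, Nat.cast_one] at h1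
      simp only [hDdef, eval_mul, sh_eval]
      exact mul_ne_zero h1 (hqn n hn)
    -- the big-O bound
    obtain ⟨C, hC0, hCw⟩ :=
      ((isBigO_of_degree_le (X ^ 2 * F) D (key_degree p q hp hq hdeg hlead hd))).exists_pos
    have hCb := hCw.bound
    have hCbn : ∀ᶠ n : ℕ in atTop,
        ‖eval (n : ℝ) (X ^ 2 * F)‖ ≤ C * ‖eval (n : ℝ) D‖ :=
      tendsto_natCast_atTop_atTop.eventually hCb
    have ht_bound : ∀ᶠ n : ℕ in atTop, |t n| ≤ C / (n : ℝ) ^ 2 := by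
      filter_upwards [hCbn, eventually_ge_atTop 1] with n hb hn
      have hDne := hD_ne n hn
      have hn0 : (0 : ℝ) < (n : ℝ) ^ 2 := by
        have : (1 : ℝ) ≤ (n : ℝ) := by exact_mod_cast hn
        positivity
      rw [eval_mul, eval_pow, eval_X, Real.norm_eq_abs, Real.norm_eq_abs, abs_mul,
        abs_of_nonneg (le_of_lt hn0)] at hb
      rw [htdef]
      simp only
      rw [abs_div, div_le_iff₀ (abs_pos.2 hDne), div_mul_eq_mul_div, le_div_iff₀ hn0,
        mul_comm]
      exact hb
    have ht_half : ∀ᶠ n : ℕ in atTop, |t n| ≤ 1 / 2 := by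
      have hlim : Tendsto (fun n : ℕ => C / (n : ℝ) ^ 2) atTop (𝓝 0) := by
        apply tendsto_const_nhds.div_atTop
        exact (tendsto_pow_atTop (by norm_num : 2 ≠ 0)).comp tendsto_natCast_atTop_atTop
      filter_upwards [ht_bound, hlim.eventually (eventually_lt_nhds (by norm_num : (0:ℝ) < 1/2))]
        with n h1 h2
      linarith
    -- the key identity
    have hident : ∀ n : ℕ, 1 ≤ n → r n / r (n + 1) = 1 + t n := by
      intro n hn
      have e1 := hpn (n + 1) (by omega)
      have e2 := hqn (n + 1) (by omega)
      rw [Nat.cast_add, Nat.cast_one] at e1 e2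
      have e3 := hpn n hn
      have e4 := hqn n hn
      have e5 := hD_ne n hn
      simp only [hrdef, htdef, hFdef, hDdef, eval_mul, eval_sub, sh_eval, Nat.cast_add,
        Nat.cast_one]
      rw [eval_mul, sh_eval] at e5
      field_simp
      ring
    set b : ℕ → ℝ := fun k => a (2 * k) + a (2 * k + 1) with hbdef
    have hdbl : Tendsto (fun k : ℕ => 2 * k) atTop atTop :=
      tendsto_atTop_atTop_of_monotone (fun _ _ h => by omega) (fun c => ⟨c, by omega⟩)
    have hdbl1 : Tendsto (fun k : ℕ => 2 * k + 1) atTop atTop :=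
      tendsto_atTop_atTop_of_monotone (fun _ _ h => by omega) (fun c => ⟨c, by omega⟩)
    have hb_bound : ∀ᶠ k in atTop, ‖b k‖ ≤ 2 * C * (1 / (k : ℝ) ^ 2) := by
      filter_upwards [hdbl.eventually hpos, hdbl1.eventually hpos, hdbl.eventually ht_bound,
        hdbl.eventually ht_half, eventually_ge_atTop 1] with k hp2 hp21 htb hth hk1
      have hrne : r (2 * k) ≠ 0 := ne_of_gt hp2
      have hrne1 : r (2 * k + 1) ≠ 0 := ne_of_gt hp21
      have hu : ((u (2 * k + 1) : ℝ)) = -(u (2 * k) : ℝ) := by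
        rw [u_odd k]; push_cast; ring
      have key : b k = (u (2 * k) : ℝ) * Real.log (1 + t (2 * k)) := by
        rw [← hident (2 * k) (by omega), Real.log_div hrne hrne1]
        simp only [hbdef, hadef, hu]
        ring
      rw [key, Real.norm_eq_abs, abs_mul, u_abs, one_mul]
      have h1 := log_one_add_abs_le hth
      have h2 : |t (2 * k)| ≤ C / ((2 * k : ℕ) : ℝ) ^ 2 := htb
      have h3 : ((2 * k : ℕ) : ℝ) ^ 2 = 4 * (k : ℝ) ^ 2 := by push_cast; ring
      rw [h3] at h2
      have hk2 : (0 : ℝ) < (k : ℝ) ^ 2 := by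
        have : (1 : ℝ) ≤ (k : ℝ) := by exact_mod_cast hk1
        positivity
      have hk0 : (k : ℝ) ≠ 0 := by positivity
      calc |Real.log (1 + t (2 * k))| ≤ 2 * |t (2 * k)| := h1
        _ ≤ 2 * (C / (4 * (k : ℝ) ^ 2)) := by linarith
        _ = (C / 2) * (1 / (k : ℝ) ^ 2) := by field_simp; ring
        _ ≤ 2 * C * (1 / (k : ℝ) ^ 2) := by
            apply mul_le_mul_of_nonneg_right (by linarith) (by positivity)
    have hb_sum : Summable b :=
      Summable.of_norm_bounded_eventually_nat
        ((Real.summable_one_div_nat_pow.2 (by norm_num)).mul_left (2 * C)) hb_bound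
    -- choose cutoffs
    obtain ⟨M, hM⟩ := eventually_atTop.1 hpos
    set K₀ : ℕ := M + 1 with hK₀def
    set N₀ : ℕ := 2 * K₀ with hN₀def
    have hposN : ∀ n, N₀ ≤ n → 0 < r n := fun n hn => hM n (by omega)
    set A : ℕ → ℝ := fun N => ∑ n ∈ Finset.Icc N₀ N, a n with hAdef
    set B : ℕ → ℝ := fun K => ∑ k ∈ Finset.Icc K₀ K, b k with hBdef
    have hAB : ∀ K, M ≤ K → A (2 * K + 1) = B K := by
      intro K hK
      induction K, hK using Nat.le_induction with
      | base =>
        have e1 : Finset.Icc N₀ (2 * M + 1) = ∅ := Finset.Icc_eq_empty (by omega)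
        have e2 : Finset.Icc K₀ M = ∅ := Finset.Icc_eq_empty (by omega)
        simp [hAdef, hBdef, e1, e2]
      | succ K hK ih =>
        have e0 : 2 * (K + 1) + 1 = (2 * K + 1) + 1 + 1 := by ring
        have eA : A (2 * (K + 1) + 1) = A (2 * K + 1) + a (2 * K + 1 + 1) + a (2 * K + 1 + 1 + 1) := by
          rw [hAdef]
          simp only
          rw [e0, Finset.sum_Icc_succ_top (by omega), Finset.sum_Icc_succ_top (by omega)]
        have eB : B (K + 1) = B K + b (K + 1) := by
          rw [hBdef]
          simp only
          rw [Finset.sum_Icc_succ_top (by omega)]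
        rw [eA, eB, ih, hbdef]
        simp only
        have e1 : 2 * K + 1 + 1 = 2 * (K + 1) := by ring
        rw [e1]
        ring
    set S : ℝ := (∑' k, b k) - ∑ k ∈ Finset.range K₀, b k with hSdef
    have hBlim : Tendsto B atTop (𝓝 S) := by
      have h1 : Tendsto (fun K => ∑ k ∈ Finset.range (K + 1), b k) atTop (𝓝 (∑' k, b k)) :=
        hb_sum.hasSum.tendsto_sum_nat.comp (tendsto_add_atTop_nat 1)
      have h2 := h1.sub_const (∑ k ∈ Finset.range K₀, b k)
      apply h2.congr'
      filter_upwards [eventually_ge_atTop K₀] with K hK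
      show _ = B K
      rw [hBdef]
      simp only [← Finset.Ico_add_one_right_eq_Icc]
      rw [Finset.sum_Ico_eq_sub _ (by omega : K₀ ≤ K + 1)]
    have hlog0 : Tendsto (fun n => Real.log (r n)) atTop (𝓝 0) := by
      have h1 := (Real.continuousAt_log one_ne_zero).tendsto.comp hr_lim
      rw [Real.log_one] at h1
      exact h1
    have hlogabs : Tendsto (fun n => |Real.log (r n)|) atTop (𝓝 0) := by
      simpa using hlog0.abs
    have ha0 : Tendsto a atTop (𝓝 0) := by
      rw [tendsto_zero_iff_norm_tendsto_zero]
      apply hlogabs.congr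
      intro n
      show |Real.log (r n)| = ‖(u n : ℝ) * Real.log (r n)‖
      rw [Real.norm_eq_abs, abs_mul, u_abs, one_mul]
    have hAlim : Tendsto A atTop (𝓝 S) := by
      have hhalf : Tendsto (fun N : ℕ => N / 2) atTop atTop :=
        tendsto_atTop_atTop_of_monotone (fun _ _ h => Nat.div_le_div_right h)
          (fun c => ⟨2 * c, by omega⟩)
      have hB2 : Tendsto (fun N => B (N / 2)) atTop (𝓝 S) := hBlim.comp hhalf
      have hcorr : Tendsto (fun N => if Even N then a (N + 1) else 0) atTop (𝓝 0) := by
        rw [tendsto_zero_iff_norm_tendsto_zero]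
        have hg : Tendsto (fun N => ‖a (N + 1)‖) atTop (𝓝 0) := by
          simpa using (ha0.comp (tendsto_add_atTop_nat 1)).norm
        apply squeeze_zero (fun N => norm_nonneg _) _ hg
        intro N
        split_ifs <;> simp
      have h3 := hB2.sub hcorr
      rw [sub_zero] at h3
      apply h3.congr'
      filter_upwards [eventually_ge_atTop N₀] with N hN
      rcases Nat.even_or_odd N with he | ho
      · obtain ⟨K, hKN⟩ := he
        have hKN2 : N = 2 * K := by omega
        subst hKN2
        have hAA := hAB K (by omega)
        have hstep : A (2 * K + 1) = A (2 * K) + a (2 * K + 1) := by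
          rw [hAdef]; simp only
          rw [Finset.sum_Icc_succ_top (by omega)]
        have hdv : 2 * K / 2 = K := by omega
        rw [if_pos (even_two_mul K), hdv]
        linarith
      · obtain ⟨K, hKN⟩ := ho
        subst hKN
        have hAA := hAB K (by omega)
        rw [if_neg (by simp [parity_simps] : ¬ Even (2 * K + 1))]
        have hdv : (2 * K + 1) / 2 = K := by omega
        rw [hdv, sub_zero]
        exact hAA.symm
    -- from sums to products
    have hzexp : ∀ x : ℝ, 0 < x → ∀ n : ℕ, x ^ (u n) = Real.exp ((u n : ℝ) * Real.log x) := by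
      intro x hx n
      rcases u_sq n with h | h <;> rw [h]
      · push_cast
        rw [zpow_one, one_mul, Real.exp_log hx]
      · push_cast
        rw [zpow_neg, zpow_one, neg_mul, one_mul, Real.exp_neg, Real.exp_log hx]
    set Cst : ℝ := ∏ n ∈ Finset.Icc 1 (N₀ - 1), (r n) ^ (u n) with hCstdef
    have hprod : ∀ᶠ N in atTop, (∏ n ∈ Finset.Icc 1 N, (r n) ^ (u n)) = Cst * Real.exp (A N) := by
      filter_upwards [eventually_ge_atTop N₀] with N hN
      have hIcc1 : ∀ X : ℕ, Finset.Icc 1 X = Finset.Ioc 0 X := by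
        intro X; ext x; simp only [Finset.mem_Icc, Finset.mem_Ioc]; omega
      have hIcc2 : Finset.Icc N₀ N = Finset.Ioc (N₀ - 1) N := by
        ext x; simp only [Finset.mem_Icc, Finset.mem_Ioc]; omega
      have hsplit := Finset.prod_Ioc_consecutive (fun n => (r n) ^ (u n))
        (by omega : 0 ≤ N₀ - 1) (by omega : N₀ - 1 ≤ N)
      have hexp : (∏ n ∈ Finset.Icc N₀ N, (r n) ^ (u n)) = Real.exp (A N) := by
        rw [hAdef]
        simp only
        rw [Real.exp_sum]
        apply Finset.prod_congr rfl
        intro n hn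
        exact hzexp (r n) (hposN n (Finset.mem_Icc.1 hn).1) n
      rw [hIcc1, ← hsplit, ← hIcc1, ← hIcc2, hexp, hCstdef]
    have hCst_ne : Cst ≠ 0 := by
      rw [hCstdef]
      apply Finset.prod_ne_zero_iff.2
      intro n hn
      have hn1 : 1 ≤ n := (Finset.mem_Icc.1 hn).1
      exact zpow_ne_zero _ (div_ne_zero (hpn n hn1) (hqn n hn1))
    refine ⟨Cst * Real.exp S, mul_ne_zero hCst_ne (Real.exp_ne_zero S), ?_⟩
    have hfin : Tendsto (fun N => Cst * Real.exp (A N)) atTop (𝓝 (Cst * Real.exp S)) :=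
      (((Real.continuous_exp.tendsto S).comp hAlim).const_mul Cst)
    exact hfin.congr' (EventuallyEq.symm hprod)
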